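/- arXiv:1211.3999 — 2 statements merged into one kernel-verified Lean document; each statement's English description precedes it below -/
import Mathlib

section
/- Let X and Y be random variables on a probability space taking values in a standard Borel space S, and let A be a sub-sigma-field of F. Then |beta(A, σ(X); P) − beta(A, σ(Y); P)| ≤ 2·P(X ≠ Y). -/
open MeasureTheory ProbabilityTheory Filter Set

/-- The absolute regularity (β-mixing) coefficient between two sub-σ-fields. -/
noncomputable def betaMix {Ω : Type*} {mΩ : MeasurableSpace Ω} (P : Measure Ω)
    (𝓐 𝓑 : MeasurableSpace Ω) : ℝ :=
  sSup { x : ℝ | ∃ (I J : ℕ) (f : Fin I → Set Ω) (g : Fin J → Set Ω),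
    (∀ i, MeasurableSet[𝓐] (f i)) ∧ (∀ j, MeasurableSet[𝓑] (g j)) ∧
    Pairwise (Function.onFun Disjoint f) ∧ (⋃ i, f i) = Set.univ ∧
    Pairwise (Function.onFun Disjoint g) ∧ (⋃ j, g j) = Set.univ ∧
    x = (1/2) * ∑ i, ∑ j,
      |(P (f i ∩ g j)).toReal - (P (f i)).toReal * (P (g j)).toReal| }

/-- The strong mixing (α) coefficient between two sub-σ-fields. -/
noncomputable def alphaMix {Ω : Type*} {mΩ : MeasurableSpace Ω} (P : Measure Ω)
    (𝓐 𝓑 : MeasurableSpace Ω) : ℝ :=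
  sSup { x : ℝ | ∃ (A B : Set Ω), MeasurableSet[𝓐] A ∧ MeasurableSet[𝓑] B ∧
    x = |(P (A ∩ B)).toReal - (P A).toReal * (P B).toReal| }

/-- β mixing coefficient of a two-sided sequence with gap `n`. -/
noncomputable def betaSeq {Ω E : Type*} {mΩ : MeasurableSpace Ω} [MeasurableSpace E]
    (X : ℤ → Ω → E) (n : ℕ) (P : Measure Ω) : ℝ :=
  betaMix P (⨆ k : {k : ℤ // k ≤ 0}, MeasurableSpace.comap (X k) inferInstance)
            (⨆ k : {k : ℤ // (n : ℤ) ≤ k}, MeasurableSpace.comap (X k) inferInstance)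

/-- α mixing coefficient of a two-sided sequence with gap `n`. -/
noncomputable def alphaSeq {Ω E : Type*} {mΩ : MeasurableSpace Ω} [MeasurableSpace E]
    (X : ℤ → Ω → E) (n : ℕ) (P : Measure Ω) : ℝ :=
  alphaMix P (⨆ k : {k : ℤ // k ≤ 0}, MeasurableSpace.comap (X k) inferInstance)
             (⨆ k : {k : ℤ // (n : ℤ) ≤ k}, MeasurableSpace.comap (X k) inferInstance)

/-- Strict stationarity of a two-sided sequence. -/
def IsStationarySeq {Ω E : Type*} {mΩ : MeasurableSpace Ω} [MeasurableSpace E]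
    (P : Measure Ω) (X : ℤ → Ω → E) : Prop :=
  ∀ j : ℤ, P.map (fun ω => fun k : ℤ => X (k + j) ω) = P.map (fun ω => fun k : ℤ => X k ω)

section helpers
variable {Ω : Type*} {mΩ : MeasurableSpace Ω} (P : Measure Ω) [IsProbabilityMeasure P]

lemma sum_toReal_disjoint {n : ℕ} {A : Fin n → Set Ω} (hm : ∀ i, MeasurableSet (A i))
    (hd : Pairwise (Function.onFun Disjoint A)) :
    ∑ i, (P (A i)).toReal = (P (⋃ i, A i)).toReal := by
  rw [measure_iUnion hd hm, tsum_fintype, ENNReal.toReal_sum (fun a _ => measure_ne_top P _)]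

lemma partition_sum_inter {n : ℕ} {A : Fin n → Set Ω} (hm : ∀ i, MeasurableSet (A i))
    (hd : Pairwise (Function.onFun Disjoint A)) (hc : (⋃ i, A i) = Set.univ)
    {s : Set Ω} (hs : MeasurableSet s) :
    ∑ i, (P (A i ∩ s)).toReal = (P s).toReal := by
  have : ∑ i, (P (A i ∩ s)).toReal = (P (⋃ i, A i ∩ s)).toReal :=
    sum_toReal_disjoint P (fun i => (hm i).inter hs)
      (fun i j hij => ((hd hij).mono inter_subset_left inter_subset_left))
  rw [this, ← Set.iUnion_inter, hc, Set.univ_inter]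

lemma partition_sum_one {n : ℕ} {A : Fin n → Set Ω} (hm : ∀ i, MeasurableSet (A i))
    (hd : Pairwise (Function.onFun Disjoint A)) (hc : (⋃ i, A i) = Set.univ) :
    ∑ i, (P (A i)).toReal = 1 := by
  rw [sum_toReal_disjoint P hm hd, hc, measure_univ, ENNReal.toReal_one]

lemma meas_toReal_mono {s t : Set Ω} (h : s ⊆ t) : (P s).toReal ≤ (P t).toReal :=
  ENNReal.toReal_mono (measure_ne_top P t) (measure_mono h)

lemma meas_sub_le (s t : Set Ω) : (P s).toReal - (P t).toReal ≤ (P (s \ t)).toReal := by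
  have hsub : s ⊆ t ∪ s \ t := by
    intro x hx
    by_cases h : x ∈ t
    · exact Set.mem_union_left _ h
    · exact Set.mem_union_right _ ⟨hx, h⟩
  have h1 : P s ≤ P t + P (s \ t) :=
    le_trans (measure_mono hsub) (measure_union_le t (s \ t))
  have h2 : (P s).toReal ≤ ((P t) + (P (s \ t))).toReal :=
    ENNReal.toReal_mono (by finiteness) h1
  rw [ENNReal.toReal_add (measure_ne_top P _) (measure_ne_top P _)] at h2
  linarith

lemma meas_abs_sub_le (s A A' : Set Ω) :
    |(P (s ∩ A)).toReal - (P (s ∩ A')).toReal|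
      ≤ (P (s ∩ (A \ A'))).toReal + (P (s ∩ (A' \ A))).toReal := by
  have h1 := meas_sub_le P (s ∩ A) (s ∩ A')
  have h2 := meas_sub_le P (s ∩ A') (s ∩ A)
  have e1 : (s ∩ A) \ (s ∩ A') = s ∩ (A \ A') := by ext x; simp only [Set.mem_diff, Set.mem_inter_iff]; tauto
  have e2 : (s ∩ A') \ (s ∩ A) = s ∩ (A' \ A) := by ext x; simp only [Set.mem_diff, Set.mem_inter_iff]; tauto
  rw [e1] at h1; rw [e2] at h2
  have n1 : (0:ℝ) ≤ (P (s ∩ (A \ A'))).toReal := ENNReal.toReal_nonneg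
  have n2 : (0:ℝ) ≤ (P (s ∩ (A' \ A))).toReal := ENNReal.toReal_nonneg
  rw [abs_le]; constructor <;> linarith

variable (𝓐 𝓑 : MeasurableSpace Ω)

lemma betaMix_mem_le_one (h𝓐 : 𝓐 ≤ mΩ) (h𝓑 : 𝓑 ≤ mΩ) {x : ℝ}
    (hx : x ∈ { x : ℝ | ∃ (I J : ℕ) (f : Fin I → Set Ω) (g : Fin J → Set Ω),
      (∀ i, MeasurableSet[𝓐] (f i)) ∧ (∀ j, MeasurableSet[𝓑] (g j)) ∧
      Pairwise (Function.onFun Disjoint f) ∧ (⋃ i, f i) = Set.univ ∧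
      Pairwise (Function.onFun Disjoint g) ∧ (⋃ j, g j) = Set.univ ∧
      x = (1/2) * ∑ i, ∑ j,
        |(P (f i ∩ g j)).toReal - (P (f i)).toReal * (P (g j)).toReal| }) :
    x ≤ 1 := by
  obtain ⟨I, J, f, g, hf, hg, hfd, hfc, hgd, hgc, rfl⟩ := hx
  have hfm : ∀ i, MeasurableSet[mΩ] (f i) := fun i => h𝓐 _ (hf i)
  have hgm : ∀ j, MeasurableSet[mΩ] (g j) := fun j => h𝓑 _ (hg j)
  have step : ∀ i j, |(P (f i ∩ g j)).toReal - (P (f i)).toReal * (P (g j)).toReal|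
      ≤ (P (f i ∩ g j)).toReal + (P (f i)).toReal * (P (g j)).toReal := by
    intro i j
    have n1 : (0:ℝ) ≤ (P (f i ∩ g j)).toReal := ENNReal.toReal_nonneg
    have n2 : (0:ℝ) ≤ (P (f i)).toReal * (P (g j)).toReal :=
      mul_nonneg ENNReal.toReal_nonneg ENNReal.toReal_nonneg
    rw [abs_le]; constructor <;> linarith
  calc (1/2 : ℝ) * ∑ i, ∑ j, |(P (f i ∩ g j)).toReal - (P (f i)).toReal * (P (g j)).toReal|
      ≤ (1/2) * ∑ i, ∑ j, ((P (f i ∩ g j)).toReal + (P (f i)).toReal * (P (g j)).toReal) := by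
        apply mul_le_mul_of_nonneg_left _ (by norm_num)
        exact Finset.sum_le_sum fun i _ => Finset.sum_le_sum fun j _ => step i j
    _ = (1/2) * (∑ i, ∑ j, (P (f i ∩ g j)).toReal
          + ∑ i, (P (f i)).toReal * ∑ j, (P (g j)).toReal) := by
        congr 1
        refine Finset.sum_congr rfl (fun i _ => by
          rw [Finset.sum_add_distrib, ← Finset.mul_sum]) |>.trans Finset.sum_add_distrib
    _ = (1/2) * (1 + 1) := by
        rw [partition_sum_one P hgm hgd hgc]
        congr 2
        · rw [← partition_sum_one P hfm hfd hfc]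
          refine Finset.sum_congr rfl fun i _ => ?_
          have := partition_sum_inter P hgm hgd hgc (hfm i)
          rw [← this]
          refine Finset.sum_congr rfl fun j _ => by rw [Set.inter_comm]
        · simp [partition_sum_one P hfm hfd hfc]
    _ = 1 := by norm_num

lemma betaMix_bddAbove (h𝓐 : 𝓐 ≤ mΩ) (h𝓑 : 𝓑 ≤ mΩ) :
    BddAbove { x : ℝ | ∃ (I J : ℕ) (f : Fin I → Set Ω) (g : Fin J → Set Ω),
      (∀ i, MeasurableSet[𝓐] (f i)) ∧ (∀ j, MeasurableSet[𝓑] (g j)) ∧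
      Pairwise (Function.onFun Disjoint f) ∧ (⋃ i, f i) = Set.univ ∧
      Pairwise (Function.onFun Disjoint g) ∧ (⋃ j, g j) = Set.univ ∧
      x = (1/2) * ∑ i, ∑ j,
        |(P (f i ∩ g j)).toReal - (P (f i)).toReal * (P (g j)).toReal| } :=
  ⟨1, fun _ hx => betaMix_mem_le_one P 𝓐 𝓑 h𝓐 h𝓑 hx⟩

lemma betaMix_zero_mem :
    (0:ℝ) ∈ { x : ℝ | ∃ (I J : ℕ) (f : Fin I → Set Ω) (g : Fin J → Set Ω),
      (∀ i, MeasurableSet[𝓐] (f i)) ∧ (∀ j, MeasurableSet[𝓑] (g j)) ∧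
      Pairwise (Function.onFun Disjoint f) ∧ (⋃ i, f i) = Set.univ ∧
      Pairwise (Function.onFun Disjoint g) ∧ (⋃ j, g j) = Set.univ ∧
      x = (1/2) * ∑ i, ∑ j,
        |(P (f i ∩ g j)).toReal - (P (f i)).toReal * (P (g j)).toReal| } := by
  refine ⟨1, 1, fun _ => Set.univ, fun _ => Set.univ, fun _ => MeasurableSet.univ,
    fun _ => MeasurableSet.univ, Subsingleton.pairwise, by simp [Set.iUnion_const], Subsingleton.pairwise, by simp [Set.iUnion_const], ?_⟩
  simp [measure_univ]

lemma betaMix_nonneg (h𝓐 : 𝓐 ≤ mΩ) (h𝓑 : 𝓑 ≤ mΩ) : 0 ≤ betaMix P 𝓐 𝓑 :=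
  le_csSup (betaMix_bddAbove P 𝓐 𝓑 h𝓐 h𝓑) (betaMix_zero_mem P 𝓐 𝓑)

end helpers

lemma partition_lift {Ω S : Type*} [MeasurableSpace S]
    {X : Ω → S} {J : ℕ} {g : Fin J → Set Ω}
    (hg : ∀ j, MeasurableSet[MeasurableSpace.comap X inferInstance] (g j))
    (hdisj : Pairwise (Function.onFun Disjoint g)) (hcov : (⋃ j, g j) = Set.univ) :
    ∃ C : Fin (J+1) → Set S, (∀ j, MeasurableSet (C j)) ∧
      Pairwise (Function.onFun Disjoint C) ∧ (⋃ j, C j) = Set.univ ∧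
      (∀ j : Fin J, X ⁻¹' C j.castSucc = g j) ∧ X ⁻¹' C (Fin.last J) = ∅ := by
  have hg' : ∀ j, ∃ t, MeasurableSet t ∧ X ⁻¹' t = g j := fun j =>
    MeasurableSpace.measurableSet_comap.mp (hg j)
  choose B hBm hBp using hg'
  set B' : Fin J → Set S := fun j => B j \ ⋃ (k : Fin J) (_ : (k : ℕ) < (j : ℕ)), B k with hB'
  have hB'm : ∀ j, MeasurableSet (B' j) :=
    fun j => (hBm j).diff (MeasurableSet.iUnion fun k => MeasurableSet.iUnion fun _ => hBm k)
  have hB'd : Pairwise (Function.onFun Disjoint B') := by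
    intro i j hij
    rcases lt_or_gt_of_ne (fun h : (i : ℕ) = (j : ℕ) => hij (Fin.ext h)) with h | h
    · exact Set.disjoint_left.mpr fun x hxi hxj =>
        hxj.2 (mem_iUnion.mpr ⟨i, mem_iUnion.mpr ⟨h, hxi.1⟩⟩)
    · exact Set.disjoint_left.mpr fun x hxi hxj =>
        hxi.2 (mem_iUnion.mpr ⟨j, mem_iUnion.mpr ⟨h, hxj.1⟩⟩)
  have hpre : ∀ j, X ⁻¹' B' j = g j := by
    intro j
    ext ω
    simp only [hB', mem_preimage, mem_diff, mem_iUnion]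
    constructor
    · rintro ⟨h1, _⟩; show ω ∈ g j; rw [← hBp j]; exact h1
    · intro h
      have h1 : X ω ∈ B j := by rw [← hBp j] at h; exact h
      refine ⟨h1, ?_⟩
      rintro ⟨k, hk, hxk⟩
      have hk2 : ω ∈ g k := by rw [← hBp k]; exact hxk
      exact (Set.disjoint_left.mp (hdisj (Fin.ne_of_lt (Fin.lt_def.mpr hk)).symm) h) hk2
  refine ⟨fun j => if h : (j : ℕ) < J then B' ⟨j, h⟩ else (⋃ k, B' k)ᶜ, ?_, ?_, ?_, ?_, ?_⟩
  · intro j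
    by_cases h : (j : ℕ) < J
    · simpa [h] using hB'm ⟨j, h⟩
    · simpa [h] using (MeasurableSet.iUnion hB'm).compl
  · intro i j hij
    by_cases hi : (i : ℕ) < J <;> by_cases hj : (j : ℕ) < J <;>
      simp only [Function.onFun, hi, hj, dif_pos, dif_neg, not_false_iff]
    · exact hB'd fun h => hij (Fin.ext (congrArg Fin.val h : _))
    · exact Set.disjoint_left.mpr fun x hx hxc => hxc (mem_iUnion.mpr ⟨_, hx⟩)
    · exact Set.disjoint_right.mpr fun x hx hxc => hxc (mem_iUnion.mpr ⟨_, hx⟩)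
    · omega
  · apply Set.eq_univ_of_forall
    intro x
    by_cases hx : x ∈ ⋃ k, B' k
    · obtain ⟨k, hk⟩ := mem_iUnion.mp hx
      exact mem_iUnion.mpr ⟨k.castSucc, by simp only [Fin.coe_castSucc, Fin.is_lt k, dif_pos]; exact hk⟩
    · refine mem_iUnion.mpr ⟨Fin.last J, ?_⟩
      simp only [Fin.val_last, lt_irrefl, dif_neg, not_false_iff]
      exact hx
  · intro j
    have h : ((j.castSucc : Fin (J+1)) : ℕ) < J := j.is_lt
    simp only [h, dif_pos]
    rw [← hpre j]
    rfl
  · have h : ¬ ((Fin.last J : Fin (J+1)) : ℕ) < J := by simp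
    simp only [h, dif_neg, not_false_iff]
    rw [preimage_compl, preimage_iUnion]
    simp only [hpre]
    rw [hcov, compl_univ]

lemma betaMix_key {Ω S : Type*} {mΩ : MeasurableSpace Ω} [MeasurableSpace S]
    (P : Measure Ω) [IsProbabilityMeasure P]
    (X Y : Ω → S) (hX : Measurable X) (hY : Measurable Y)
    (𝓐 : MeasurableSpace Ω) (h𝓐 : 𝓐 ≤ mΩ) :
    betaMix P 𝓐 (MeasurableSpace.comap X inferInstance)
      ≤ betaMix P 𝓐 (MeasurableSpace.comap Y inferInstance)
        + 2 * (P {ω | X ω ≠ Y ω}).toReal := by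
  apply Real.sSup_le
  · rintro x ⟨I, J, f, g, hf, hg, hfd, hfc, hgd, hgc, rfl⟩
    obtain ⟨C, hCm, hCd, hCc, hCpre, hClast⟩ := partition_lift hg hgd hgc
    have hfm : ∀ i, MeasurableSet[mΩ] (f i) := fun i => h𝓐 _ (hf i)
    have hgXm : ∀ j : Fin (J+1), MeasurableSet[mΩ] (X ⁻¹' C j) := fun j => hX (hCm j)
    have hgYm : ∀ j : Fin (J+1), MeasurableSet[mΩ] (Y ⁻¹' C j) := fun j => hY (hCm j)
    have hgYd : Pairwise (Function.onFun Disjoint fun j : Fin (J+1) => Y ⁻¹' C j) :=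
      fun i j hij => (hCd hij).preimage Y
    have hgYc : (⋃ j : Fin (J+1), Y ⁻¹' C j) = Set.univ := by
      rw [← Set.preimage_iUnion, hCc, Set.preimage_univ]
    -- D and E families
    have hDm : ∀ j : Fin (J+1), MeasurableSet[mΩ] (X ⁻¹' C j \ Y ⁻¹' C j) :=
      fun j => (hgXm j).diff (hgYm j)
    have hEm : ∀ j : Fin (J+1), MeasurableSet[mΩ] (Y ⁻¹' C j \ X ⁻¹' C j) :=
      fun j => (hgYm j).diff (hgXm j)
    have hDsum : ∑ j : Fin (J+1), (P (X ⁻¹' C j \ Y ⁻¹' C j)).toReal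
        ≤ (P {ω | X ω ≠ Y ω}).toReal := by
      rw [sum_toReal_disjoint P hDm (fun i j hij =>
        ((hCd hij).preimage X).mono diff_subset diff_subset)]
      refine meas_toReal_mono P (Set.iUnion_subset fun j ω hω => ?_)
      exact fun h => hω.2 (show Y ω ∈ C j from h ▸ hω.1)
    have hEsum : ∑ j : Fin (J+1), (P (Y ⁻¹' C j \ X ⁻¹' C j)).toReal
        ≤ (P {ω | X ω ≠ Y ω}).toReal := by
      rw [sum_toReal_disjoint P hEm (fun i j hij =>
        ((hCd hij).preimage Y).mono diff_subset diff_subset)]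
      refine meas_toReal_mono P (Set.iUnion_subset fun j ω hω => ?_)
      exact fun h => hω.2 (show X ω ∈ C j from h.symm ▸ hω.1)
    -- rewrite the X-sum over the lifted partition
    have hrw : ∀ i, ∑ j : Fin J,
        |(P (f i ∩ g j)).toReal - (P (f i)).toReal * (P (g j)).toReal|
        = ∑ j : Fin (J+1),
        |(P (f i ∩ X ⁻¹' C j)).toReal - (P (f i)).toReal * (P (X ⁻¹' C j)).toReal| := by
      intro i
      rw [Fin.sum_univ_castSucc, hClast]
      simp only [Set.inter_empty, measure_empty, ENNReal.toReal_zero, mul_zero, sub_zero,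
        abs_zero, add_zero]
      exact Finset.sum_congr rfl fun j _ => by rw [hCpre j]
    -- pointwise estimate
    have key : ∀ (i : Fin I) (j : Fin (J+1)),
        |(P (f i ∩ X ⁻¹' C j)).toReal - (P (f i)).toReal * (P (X ⁻¹' C j)).toReal|
        ≤ |(P (f i ∩ Y ⁻¹' C j)).toReal - (P (f i)).toReal * (P (Y ⁻¹' C j)).toReal|
          + ((P (f i ∩ (X ⁻¹' C j \ Y ⁻¹' C j))).toReal
             + (P (f i ∩ (Y ⁻¹' C j \ X ⁻¹' C j))).toReal)
          + (P (f i)).toReal * ((P (X ⁻¹' C j \ Y ⁻¹' C j)).toReal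
             + (P (Y ⁻¹' C j \ X ⁻¹' C j)).toReal) := by
      intro i j
      have h1 := meas_abs_sub_le P (f i) (X ⁻¹' C j) (Y ⁻¹' C j)
      have h2 : |(P (X ⁻¹' C j)).toReal - (P (Y ⁻¹' C j)).toReal|
          ≤ (P (X ⁻¹' C j \ Y ⁻¹' C j)).toReal + (P (Y ⁻¹' C j \ X ⁻¹' C j)).toReal := by
        simpa [Set.univ_inter] using meas_abs_sub_le P Set.univ (X ⁻¹' C j) (Y ⁻¹' C j)
      have hb : (0:ℝ) ≤ (P (f i)).toReal := ENNReal.toReal_nonneg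
      have e : (P (f i ∩ X ⁻¹' C j)).toReal - (P (f i)).toReal * (P (X ⁻¹' C j)).toReal
          = ((P (f i ∩ Y ⁻¹' C j)).toReal - (P (f i)).toReal * (P (Y ⁻¹' C j)).toReal)
            + (((P (f i ∩ X ⁻¹' C j)).toReal - (P (f i ∩ Y ⁻¹' C j)).toReal)
               + (P (f i)).toReal * ((P (Y ⁻¹' C j)).toReal - (P (X ⁻¹' C j)).toReal)) := by
        ring
      rw [e]
      refine le_trans (abs_add_le _ _) ?_
      refine le_trans (add_le_add_right (abs_add_le _ _) _) ?_
      rw [abs_mul, abs_of_nonneg hb,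
        abs_sub_comm ((P (Y ⁻¹' C j)).toReal) ((P (X ⁻¹' C j)).toReal)]
      have h3 := mul_le_mul_of_nonneg_left h2 hb
      linarith
    -- the candidate element for Y
    have hymem : ((1:ℝ)/2) * ∑ i, ∑ j : Fin (J+1),
        |(P (f i ∩ Y ⁻¹' C j)).toReal - (P (f i)).toReal * (P (Y ⁻¹' C j)).toReal|
        ∈ { x : ℝ | ∃ (I' J' : ℕ) (f' : Fin I' → Set Ω) (g' : Fin J' → Set Ω),
          (∀ i, MeasurableSet[𝓐] (f' i)) ∧
          (∀ j, MeasurableSet[MeasurableSpace.comap Y inferInstance] (g' j)) ∧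
          Pairwise (Function.onFun Disjoint f') ∧ (⋃ i, f' i) = Set.univ ∧
          Pairwise (Function.onFun Disjoint g') ∧ (⋃ j, g' j) = Set.univ ∧
          x = (1/2) * ∑ i, ∑ j,
            |(P (f' i ∩ g' j)).toReal - (P (f' i)).toReal * (P (g' j)).toReal| } := by
      exact ⟨I, J+1, f, fun j => Y ⁻¹' C j, hf,
        fun j => MeasurableSpace.measurableSet_comap.mpr ⟨C j, hCm j, rfl⟩,
        hfd, hfc, hgYd, hgYc, rfl⟩
    have hyle : ((1:ℝ)/2) * ∑ i, ∑ j : Fin (J+1),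
        |(P (f i ∩ Y ⁻¹' C j)).toReal - (P (f i)).toReal * (P (Y ⁻¹' C j)).toReal|
        ≤ betaMix P 𝓐 (MeasurableSpace.comap Y inferInstance) :=
      le_csSup (betaMix_bddAbove P 𝓐 _ h𝓐 hY.comap_le) hymem
    -- summing the estimate
    have hB : ∑ i, ∑ j : Fin (J+1), ((P (f i ∩ (X ⁻¹' C j \ Y ⁻¹' C j))).toReal
        + (P (f i ∩ (Y ⁻¹' C j \ X ⁻¹' C j))).toReal)
        = ∑ j : Fin (J+1), ((P (X ⁻¹' C j \ Y ⁻¹' C j)).toReal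
            + (P (Y ⁻¹' C j \ X ⁻¹' C j)).toReal) := by
      rw [Finset.sum_comm]
      refine Finset.sum_congr rfl fun j _ => ?_
      rw [Finset.sum_add_distrib, partition_sum_inter P hfm hfd hfc (hDm j),
        partition_sum_inter P hfm hfd hfc (hEm j)]
    have hC : ∑ i, ∑ j : Fin (J+1), (P (f i)).toReal
          * ((P (X ⁻¹' C j \ Y ⁻¹' C j)).toReal + (P (Y ⁻¹' C j \ X ⁻¹' C j)).toReal)
        = ∑ j : Fin (J+1), ((P (X ⁻¹' C j \ Y ⁻¹' C j)).toReal
            + (P (Y ⁻¹' C j \ X ⁻¹' C j)).toReal) := by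
      have e1 : ∀ i : Fin I, ∑ j : Fin (J+1), (P (f i)).toReal
          * ((P (X ⁻¹' C j \ Y ⁻¹' C j)).toReal + (P (Y ⁻¹' C j \ X ⁻¹' C j)).toReal)
          = (P (f i)).toReal * ∑ j : Fin (J+1),
            ((P (X ⁻¹' C j \ Y ⁻¹' C j)).toReal + (P (Y ⁻¹' C j \ X ⁻¹' C j)).toReal) :=
        fun i => (Finset.mul_sum _ _ _).symm
      simp_rw [e1]
      rw [← Finset.sum_mul, partition_sum_one P hfm hfd hfc, one_mul]
    have hj2 : ∑ j : Fin (J+1), ((P (X ⁻¹' C j \ Y ⁻¹' C j)).toReal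
        + (P (Y ⁻¹' C j \ X ⁻¹' C j)).toReal) ≤ 2 * (P {ω | X ω ≠ Y ω}).toReal := by
      rw [Finset.sum_add_distrib]; linarith
    have main : ∑ i, ∑ j : Fin (J+1),
        |(P (f i ∩ X ⁻¹' C j)).toReal - (P (f i)).toReal * (P (X ⁻¹' C j)).toReal|
        ≤ (∑ i, ∑ j : Fin (J+1),
          |(P (f i ∩ Y ⁻¹' C j)).toReal - (P (f i)).toReal * (P (Y ⁻¹' C j)).toReal|)
          + 4 * (P {ω | X ω ≠ Y ω}).toReal := by
      have step1 : ∑ i, ∑ j : Fin (J+1),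
          |(P (f i ∩ X ⁻¹' C j)).toReal - (P (f i)).toReal * (P (X ⁻¹' C j)).toReal|
          ≤ ∑ i, ∑ j : Fin (J+1),
            (|(P (f i ∩ Y ⁻¹' C j)).toReal - (P (f i)).toReal * (P (Y ⁻¹' C j)).toReal|
            + ((P (f i ∩ (X ⁻¹' C j \ Y ⁻¹' C j))).toReal
               + (P (f i ∩ (Y ⁻¹' C j \ X ⁻¹' C j))).toReal)
            + (P (f i)).toReal * ((P (X ⁻¹' C j \ Y ⁻¹' C j)).toReal
               + (P (Y ⁻¹' C j \ X ⁻¹' C j)).toReal)) :=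
        Finset.sum_le_sum fun i _ => Finset.sum_le_sum fun j _ => key i j
      have split : ∑ i, ∑ j : Fin (J+1),
            (|(P (f i ∩ Y ⁻¹' C j)).toReal - (P (f i)).toReal * (P (Y ⁻¹' C j)).toReal|
            + ((P (f i ∩ (X ⁻¹' C j \ Y ⁻¹' C j))).toReal
               + (P (f i ∩ (Y ⁻¹' C j \ X ⁻¹' C j))).toReal)
            + (P (f i)).toReal * ((P (X ⁻¹' C j \ Y ⁻¹' C j)).toReal
               + (P (Y ⁻¹' C j \ X ⁻¹' C j)).toReal))
          = (∑ i, ∑ j : Fin (J+1),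
            |(P (f i ∩ Y ⁻¹' C j)).toReal - (P (f i)).toReal * (P (Y ⁻¹' C j)).toReal|)
          + (∑ i, ∑ j : Fin (J+1), ((P (f i ∩ (X ⁻¹' C j \ Y ⁻¹' C j))).toReal
               + (P (f i ∩ (Y ⁻¹' C j \ X ⁻¹' C j))).toReal))
          + (∑ i, ∑ j : Fin (J+1), (P (f i)).toReal
              * ((P (X ⁻¹' C j \ Y ⁻¹' C j)).toReal
               + (P (Y ⁻¹' C j \ X ⁻¹' C j)).toReal)) := by
        simp [Finset.sum_add_distrib]
      rw [split, hB, hC] at step1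
      linarith
    -- conclude
    have := hrw
    calc (1/2 : ℝ) * ∑ i, ∑ j : Fin J,
          |(P (f i ∩ g j)).toReal - (P (f i)).toReal * (P (g j)).toReal|
        = (1/2 : ℝ) * ∑ i, ∑ j : Fin (J+1),
          |(P (f i ∩ X ⁻¹' C j)).toReal - (P (f i)).toReal * (P (X ⁻¹' C j)).toReal| := by
          rw [Finset.sum_congr rfl fun i _ => hrw i]
      _ ≤ (1/2 : ℝ) * ((∑ i, ∑ j : Fin (J+1),
          |(P (f i ∩ Y ⁻¹' C j)).toReal - (P (f i)).toReal * (P (Y ⁻¹' C j)).toReal|)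
          + 4 * (P {ω | X ω ≠ Y ω}).toReal) := by
          apply mul_le_mul_of_nonneg_left main (by norm_num)
      _ = ((1:ℝ)/2) * (∑ i, ∑ j : Fin (J+1),
          |(P (f i ∩ Y ⁻¹' C j)).toReal - (P (f i)).toReal * (P (Y ⁻¹' C j)).toReal|)
          + 2 * (P {ω | X ω ≠ Y ω}).toReal := by ring
      _ ≤ betaMix P 𝓐 (MeasurableSpace.comap Y inferInstance)
          + 2 * (P {ω | X ω ≠ Y ω}).toReal := by linarith
  · have h1 := betaMix_nonneg P 𝓐 (MeasurableSpace.comap Y inferInstance) h𝓐 hY.comap_le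
    have h2 : (0:ℝ) ≤ 2 * (P {ω | X ω ≠ Y ω}).toReal := by positivity
    linarith


/-- |β(𝓐,σ(X);P) − β(𝓐,σ(Y);P)| ≤ 2 P(X ≠ Y) for Borel-space-valued X, Y. -/
theorem stmt3 {Ω S : Type*} {mΩ : MeasurableSpace Ω} [MeasurableSpace S] (e : S ≃ᵐ ℝ)
    (P : Measure Ω) [IsProbabilityMeasure P]
    (X Y : Ω → S) (hX : Measurable X) (hY : Measurable Y)
    (𝓐 : MeasurableSpace Ω) (h𝓐 : 𝓐 ≤ mΩ) :
    |betaMix P 𝓐 (MeasurableSpace.comap X inferInstance)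
      - betaMix P 𝓐 (MeasurableSpace.comap Y inferInstance)|
      ≤ 2 * (P {ω | X ω ≠ Y ω}).toReal := by
  rw [abs_sub_le_iff]
  constructor
  · linarith [betaMix_key P X Y hX hY 𝓐 h𝓐]
  · have h := betaMix_key P Y X hY hX 𝓐 h𝓐
    have he : {ω | Y ω ≠ X ω} = {ω | X ω ≠ Y ω} := by ext ω; exact ne_comm
    rw [he] at h
    linarith
end

section
/- Suppose (H(n), n ≥ 0) is a nonincreasing summable sequence of nonnegative numbers, and X = (X_k, k ∈ ℤ) is a nondegenerate strictly stationary sequence of {0,1}-valued random variables with Σ_{n=1}^∞ alpha(X,n;P) < ∞. Then Σ_{n=1}^∞ E H(X_1 + X_2 + ... + X_n) < ∞. -/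
open MeasureTheory ProbabilityTheory Filter Set

set_option linter.unusedSectionVars false

section Aux
variable {Ω : Type*} {mΩ : MeasurableSpace Ω} (P : Measure Ω) [IsProbabilityMeasure P]
  (X : ℤ → Ω → ℕ)

-- bounded above by 1
lemma alphaMix_bddAbove (𝓐 𝓑 : MeasurableSpace Ω) :
    ∀ x ∈ { x : ℝ | ∃ (A B : Set Ω), MeasurableSet[𝓐] A ∧ MeasurableSet[𝓑] B ∧
    x = |(P (A ∩ B)).toReal - (P A).toReal * (P B).toReal| }, x ≤ 1 := by
  rintro x ⟨A, B, -, -, rfl⟩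
  have h1 : (P (A ∩ B)).toReal ≤ 1 := by
    simpa using ENNReal.toReal_mono (by simp) (prob_le_one (μ := P) (s := A ∩ B))
  have h2 : (P A).toReal ≤ 1 := by
    simpa using ENNReal.toReal_mono (by simp) (prob_le_one (μ := P) (s := A))
  have h3 : (P B).toReal ≤ 1 := by
    simpa using ENNReal.toReal_mono (by simp) (prob_le_one (μ := P) (s := B))
  have h4 : (0:ℝ) ≤ (P (A ∩ B)).toReal := ENNReal.toReal_nonneg
  have h5 : (0:ℝ) ≤ (P A).toReal := ENNReal.toReal_nonneg
  have h6 : (0:ℝ) ≤ (P B).toReal := ENNReal.toReal_nonneg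
  rw [abs_le]
  constructor <;> nlinarith

lemma le_alphaMix {𝓐 𝓑 : MeasurableSpace Ω} {A B : Set Ω}
    (hA : MeasurableSet[𝓐] A) (hB : MeasurableSet[𝓑] B) :
    |(P (A ∩ B)).toReal - (P A).toReal * (P B).toReal| ≤ alphaMix P 𝓐 𝓑 :=
  le_csSup ⟨1, fun x hx => alphaMix_bddAbove P 𝓐 𝓑 x hx⟩ ⟨A, B, hA, hB, rfl⟩

lemma alphaMix_nonneg (𝓐 𝓑 : MeasurableSpace Ω) : 0 ≤ alphaMix P 𝓐 𝓑 := by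
  have h := le_alphaMix (𝓐 := 𝓐) (𝓑 := 𝓑) P (A := (∅ : Set Ω)) (B := (∅ : Set Ω))
    (@MeasurableSet.empty Ω 𝓐) (@MeasurableSet.empty Ω 𝓑)
  simpa using h

lemma alphaSeq_nonneg (n : ℕ) : 0 ≤ alphaSeq X n P := alphaMix_nonneg P _ _

lemma measurable_sumX (hmeas : ∀ k, Measurable (X k)) (s : Finset ℤ) : Measurable fun ω => ∑ k ∈ s, X k ω :=
  Finset.measurable_sum s (fun k _ => hmeas k)

-- the shift lemma
lemma shift_event (hmeas : ∀ k, Measurable (X k)) (hstat : IsStationarySeq P X) (t : ℤ) {C : Set (ℤ → ℕ)}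
    (hC : MeasurableSet C) :
    P {ω | (fun k => X (k + t) ω) ∈ C} = P {ω | (fun k => X k ω) ∈ C} := by
  have h1 : Measurable (fun ω => fun k : ℤ => X (k + t) ω) :=
    measurable_pi_lambda _ (fun k => hmeas _)
  have h2 : Measurable (fun ω => fun k : ℤ => X k ω) :=
    measurable_pi_lambda _ (fun k => hmeas _)
  have := hstat t
  calc P {ω | (fun k => X (k + t) ω) ∈ C}
      = P.map (fun ω => fun k : ℤ => X (k + t) ω) C := by
        rw [Measure.map_apply h1 hC]; rfl
    _ = P.map (fun ω => fun k : ℤ => X k ω) C := by rw [this]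
    _ = P {ω | (fun k => X k ω) ∈ C} := by rw [Measure.map_apply h2 hC]; rfl

lemma stat_pair (hmeas : ∀ k, Measurable (X k)) (hstat : IsStationarySeq P X) (b c b' c' : ℤ) (i j : ℕ) (t : ℤ) :
    P ({ω | ∑ k ∈ Finset.Icc b c, X k ω ≤ i} ∩ {ω | ∑ k ∈ Finset.Icc b' c', X k ω ≤ j})
    = P ({ω | ∑ k ∈ Finset.Icc (b+t) (c+t), X k ω ≤ i} ∩
         {ω | ∑ k ∈ Finset.Icc (b'+t) (c'+t), X k ω ≤ j}) := by
  set C : Set (ℤ → ℕ) :=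
    {f | ∑ k ∈ Finset.Icc b c, f k ≤ i} ∩ {f | ∑ k ∈ Finset.Icc b' c', f k ≤ j} with hCdef
  have hC : MeasurableSet C := by
    apply MeasurableSet.inter
    · exact (Finset.measurable_sum _ (fun k _ => measurable_pi_apply k)) measurableSet_Iic
    · exact (Finset.measurable_sum _ (fun k _ => measurable_pi_apply k)) measurableSet_Iic
  have key := shift_event P X hmeas hstat t hC
  have e1 : {ω | (fun k => X (k + t) ω) ∈ C}
      = {ω | ∑ k ∈ Finset.Icc (b+t) (c+t), X k ω ≤ i} ∩
        {ω | ∑ k ∈ Finset.Icc (b'+t) (c'+t), X k ω ≤ j} := by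
    ext ω
    have r1 : ∑ k ∈ Finset.Icc (b+t) (c+t), X k ω = ∑ k ∈ Finset.Icc b c, X (k + t) ω := by
      rw [← Finset.map_add_right_Icc, Finset.sum_map]; rfl
    have r2 : ∑ k ∈ Finset.Icc (b'+t) (c'+t), X k ω = ∑ k ∈ Finset.Icc b' c', X (k + t) ω := by
      rw [← Finset.map_add_right_Icc, Finset.sum_map]; rfl
    simp only [hCdef, Set.mem_setOf_eq, Set.mem_inter_iff, r1, r2]
  have e2 : {ω | (fun k => X k ω) ∈ C}
      = {ω | ∑ k ∈ Finset.Icc b c, X k ω ≤ i} ∩ {ω | ∑ k ∈ Finset.Icc b' c', X k ω ≤ j} := by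
    ext ω; simp only [hCdef, Set.mem_setOf_eq, Set.mem_inter_iff]
  rw [e1, e2] at key
  exact key.symm

lemma stat_single (hmeas : ∀ k, Measurable (X k)) (hstat : IsStationarySeq P X) (b c : ℤ) (i : ℕ) (t : ℤ) :
    P {ω | ∑ k ∈ Finset.Icc b c, X k ω ≤ i}
    = P {ω | ∑ k ∈ Finset.Icc (b+t) (c+t), X k ω ≤ i} := by
  have := stat_pair P X hmeas hstat b c b c i i t
  simpa [Set.inter_self] using this

-- measurability in the past / future σ-fields
lemma meas_past (b c : ℤ) (hc : c ≤ 0) (i : ℕ) :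
    MeasurableSet[⨆ k : {k : ℤ // k ≤ 0}, MeasurableSpace.comap (X k) inferInstance]
      {ω | ∑ k ∈ Finset.Icc b c, X k ω ≤ i} := by
  have hsum : Measurable[⨆ k : {k : ℤ // k ≤ 0}, MeasurableSpace.comap (X k) inferInstance]
      (fun ω => ∑ k ∈ Finset.Icc b c, X k ω) := by
    apply Finset.measurable_sum
    intro k hk
    have hk0 : k ≤ 0 := le_trans (Finset.mem_Icc.mp hk).2 hc
    exact measurable_iff_comap_le.mpr (le_iSup_of_le ⟨k, hk0⟩ le_rfl)
  exact hsum measurableSet_Iic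

lemma meas_future (g : ℕ) (b c : ℤ) (hb : (g:ℤ) ≤ b) (i : ℕ) :
    MeasurableSet[⨆ k : {k : ℤ // (g : ℤ) ≤ k}, MeasurableSpace.comap (X k) inferInstance]
      {ω | ∑ k ∈ Finset.Icc b c, X k ω ≤ i} := by
  have hsum : Measurable[⨆ k : {k : ℤ // (g:ℤ) ≤ k}, MeasurableSpace.comap (X k) inferInstance]
      (fun ω => ∑ k ∈ Finset.Icc b c, X k ω) := by
    apply Finset.measurable_sum
    intro k hk
    have hk0 : (g:ℤ) ≤ k := le_trans hb (Finset.mem_Icc.mp hk).1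
    exact measurable_iff_comap_le.mpr (le_iSup_of_le ⟨k, hk0⟩ le_rfl)
  exact hsum measurableSet_Iic

-- main mixing inequality
lemma mix (g : ℕ) (b c b' c' : ℤ) (hc : c ≤ 0) (hb' : (g:ℤ) ≤ b') (i j : ℕ) :
    (P ({ω | ∑ k ∈ Finset.Icc b c, X k ω ≤ i} ∩ {ω | ∑ k ∈ Finset.Icc b' c', X k ω ≤ j})).toReal
    ≤ (P {ω | ∑ k ∈ Finset.Icc b c, X k ω ≤ i}).toReal *
      (P {ω | ∑ k ∈ Finset.Icc b' c', X k ω ≤ j}).toReal + alphaSeq X g P := by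
  have := le_alphaMix P (meas_past X b c hc i) (meas_future X g b' c' hb' j)
  have h := abs_le.mp this
  unfold alphaSeq
  linarith [h.1, h.2]



-- probability that X_0 = 0 (expressed via a sum over Icc 0 0)
noncomputable def qv {Ω : Type*} {mΩ : MeasurableSpace Ω} (P : Measure Ω) (X : ℤ → Ω → ℕ) : ℝ :=
  (P {ω | ∑ k ∈ Finset.Icc (0:ℤ) 0, X k ω ≤ 0}).toReal

-- P(S_m ≤ j)
noncomputable def vP {Ω : Type*} {mΩ : MeasurableSpace Ω} (P : Measure Ω) (X : ℤ → Ω → ℕ)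
    (j m : ℕ) : ℝ :=
  (P {ω | ∑ k ∈ Finset.Icc (1:ℤ) (m:ℤ), X k ω ≤ j}).toReal

lemma P_E_eq (hmeas : ∀ k, Measurable (X k)) (hstat : IsStationarySeq P X) (i : ℤ) :
    (P {ω | ∑ k ∈ Finset.Icc i i, X k ω ≤ 0}).toReal = qv P X := by
  have h := stat_single P X hmeas hstat i i 0 (-i)
  rw [add_neg_cancel] at h
  rw [h]; rfl

lemma zeros_pair_bound (hmeas : ∀ k, Measurable (X k)) (hstat : IsStationarySeq P X) (i j : ℤ) (hij : i < j) :
    (P ({ω | ∑ k ∈ Finset.Icc i i, X k ω ≤ 0} ∩ {ω | ∑ k ∈ Finset.Icc j j, X k ω ≤ 0})).toReal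
    ≤ qv P X * qv P X + alphaSeq X (j - i).natAbs P := by
  have hstep := stat_pair P X hmeas hstat i i j j 0 0 (-i)
  rw [add_neg_cancel] at hstep
  have hcast : (((j - i).natAbs : ℤ)) = j + -i := by
    rw [Int.natAbs_of_nonneg (by omega)]; ring
  have hmix := mix P X ((j - i).natAbs) 0 0 (j + -i) (j + -i) le_rfl (le_of_eq hcast) 0 0
  rw [hstep]
  refine le_trans hmix ?_
  rw [P_E_eq P X hmeas hstat 0, P_E_eq P X hmeas hstat (j + -i)]

lemma cheb (hmeas : ∀ k, Measurable (X k)) (h01 : ∀ k ω, X k ω ≤ 1) (hstat : IsStationarySeq P X) (hα : Summable fun n : ℕ => alphaSeq X (n + 1) P)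
    (hp : 0 < 1 - qv P X) (j m : ℕ) (hm : 1 ≤ m)
    (hj : (j : ℝ) ≤ (1 - qv P X) * m / 2) :
    vP P X j m ≤ (1 + 8 * ∑' n : ℕ, alphaSeq X (n + 1) P) / ((1 - qv P X) ^ 2 * m) := by
  set q : ℝ := qv P X with hqdef
  set p : ℝ := 1 - q with hpdef
  set α' : ℝ := ∑' n : ℕ, alphaSeq X (n + 1) P with hα'def
  have hα'0 : 0 ≤ α' := tsum_nonneg (fun n => alphaSeq_nonneg P X (n + 1))
  have hq0 : (0:ℝ) ≤ q := ENNReal.toReal_nonneg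
  have hq1 : q ≤ 1 := by linarith
  set s : Finset ℤ := Finset.Icc (1:ℤ) (m:ℤ) with hsdef
  have hcard : s.card = m := by rw [hsdef, Int.card_Icc]; simp
  set E : ℤ → Set Ω := fun i => {ω | ∑ k ∈ Finset.Icc i i, X k ω ≤ 0} with hE
  have hEmeas : ∀ i, MeasurableSet (E i) :=
    fun i => (measurable_sumX X hmeas _) measurableSet_Iic
  have hEmem : ∀ i ω, ω ∈ E i ↔ X i ω = 0 := by
    intro i ω; simp [hE, Nat.le_zero]
  set Z : ℤ → Ω → ℝ := fun i ω => if X i ω = 0 then (1:ℝ) else 0 with hZ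
  have hZind : ∀ i, Z i = (E i).indicator (fun _ => (1:ℝ)) := by
    intro i; funext ω
    by_cases h : X i ω = 0 <;>
      simp [hZ, Set.indicator, hEmem i ω, h]
  have hZZind : ∀ i j : ℤ, (fun ω => Z i ω * Z j ω) = (E i ∩ E j).indicator (fun _ => (1:ℝ)) := by
    intro i j; funext ω
    by_cases h1 : X i ω = 0 <;> by_cases h2 : X j ω = 0 <;>
      simp [hZ, Set.indicator, hEmem, h1, h2]
  have hZint : ∀ i, Integrable (Z i) P := by
    intro i; rw [hZind]; exact (integrable_const 1).indicator (hEmeas i)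
  have hZZint : ∀ i j : ℤ, Integrable (fun ω => Z i ω * Z j ω) P := by
    intro i j; rw [hZZind]; exact (integrable_const 1).indicator ((hEmeas i).inter (hEmeas j))
  have hZmeas : ∀ i, Measurable (Z i) := by
    intro i; rw [hZind]; exact measurable_const.indicator (hEmeas i)
  set T : Ω → ℝ := fun ω => ∑ k ∈ s, Z k ω with hT
  have hTmeas : Measurable T := Finset.measurable_sum _ (fun k _ => hZmeas k)
  have hTint : Integrable T P := integrable_finset_sum _ (fun k _ => hZint k)
  have hPE : ∀ i, (P (E i)).toReal = q := fun i => P_E_eq P X hmeas hstat i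
  have intT : ∫ ω, T ω ∂P = m * q := by
    rw [hT, integral_finset_sum _ (fun k _ => hZint k)]
    have : ∀ k ∈ s, ∫ ω, Z k ω ∂P = q := by
      intro k _
      rw [hZind, integral_indicator_const _ (hEmeas k), measureReal_def, hPE k, smul_eq_mul, mul_one]
    rw [Finset.sum_congr rfl this, Finset.sum_const, hcard, nsmul_eq_mul]
  have hT0 : ∀ ω, 0 ≤ T ω := by
    intro ω; apply Finset.sum_nonneg; intro k _; simp only [hZ]; split <;> norm_num
  have hTm : ∀ ω, T ω ≤ m := by
    intro ω
    calc T ω ≤ ∑ k ∈ s, (1:ℝ) := by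
          apply Finset.sum_le_sum; intro k _; simp only [hZ]; split <;> norm_num
      _ = m := by rw [Finset.sum_const, hcard, nsmul_eq_mul, mul_one]
  -- second moment
  have intT2 : ∫ ω, T ω ^ 2 ∂P = ∑ i ∈ s, ∑ j ∈ s, (P (E i ∩ E j)).toReal := by
    have hT2 : ∀ ω, T ω ^ 2 = ∑ i ∈ s, ∑ j ∈ s, Z i ω * Z j ω := by
      intro ω; rw [sq, hT, Finset.sum_mul_sum]
    simp_rw [hT2]
    rw [integral_finset_sum _ (fun i _ => integrable_finset_sum _ (fun j _ => hZZint i j))]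
    apply Finset.sum_congr rfl; intro i _
    rw [integral_finset_sum _ (fun j _ => hZZint i j)]
    apply Finset.sum_congr rfl; intro j _
    rw [hZZind i j, integral_indicator_const _ ((hEmeas i).inter (hEmeas j)), smul_eq_mul, mul_one]; rfl
  -- bound on each covariance term
  have wb : ∀ i ∈ s, ∀ j ∈ s, (P (E i ∩ E j)).toReal
      ≤ q * q + (if i = j then (1:ℝ)/4 else alphaSeq X (j - i).natAbs P) := by
    intro i _ j _
    by_cases hij : i = j
    · subst hij
      rw [if_pos rfl, Set.inter_self, hPE i]
      nlinarith [sq_nonneg (q - 1/2)]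
    · rw [if_neg hij]
      rcases lt_or_gt_of_ne hij with h | h
      · exact zeros_pair_bound P X hmeas hstat i j h
      · have := zeros_pair_bound P X hmeas hstat j i h
        rw [Set.inter_comm] at this
        have hcomm : (i - j).natAbs = (j - i).natAbs := by omega
        rw [hcomm] at this
        exact this
  -- sum of alpha terms over the erased set
  have tailsum : ∀ (t : Finset ℕ), (∀ d ∈ t, 1 ≤ d) → ∑ d ∈ t, alphaSeq X d P ≤ α' := by
    intro t ht
    have heq : ∑ d ∈ t, alphaSeq X d P = ∑ n ∈ t.image (· - 1), alphaSeq X (n + 1) P := by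
      rw [Finset.sum_image (by intro a ha b hb hab; have := ht a ha; have := ht b hb; dsimp only at hab; omega)]
      apply Finset.sum_congr rfl; intro d hd; congr 1; have := ht d hd; omega
    rw [heq]
    exact hα.sum_le_tsum _ (fun n _ => alphaSeq_nonneg P X (n + 1))
  have erase_bound : ∀ i : ℤ, ∑ j ∈ s.erase i, alphaSeq X (j - i).natAbs P ≤ 2 * α' := by
    intro i
    rw [Finset.sum_comp (fun d => alphaSeq X d P) (fun j => (j - i).natAbs)]
    have step1 : ∑ d ∈ (s.erase i).image (fun j => (j - i).natAbs),
        ((s.erase i).filter (fun j => (j - i).natAbs = d)).card • alphaSeq X d P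
        ≤ ∑ d ∈ (s.erase i).image (fun j => (j - i).natAbs), 2 * alphaSeq X d P := by
      apply Finset.sum_le_sum
      intro d _
      have hcard2 : ((s.erase i).filter (fun j => (j - i).natAbs = d)).card ≤ 2 := by
        have hsub : (s.erase i).filter (fun j => (j - i).natAbs = d)
            ⊆ insert (i + (d:ℤ)) ({i - (d:ℤ)} : Finset ℤ) := by
          intro j hj
          have hd : (j - i).natAbs = d := (Finset.mem_filter.mp hj).2
          have hcases : j = i + (d:ℤ) ∨ j = i - (d:ℤ) := by omega
          rcases hcases with hji | hji
          · rw [hji]; exact Finset.mem_insert_self _ _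
          · rw [hji]; exact Finset.mem_insert_of_mem (Finset.mem_singleton_self _)
        calc _ ≤ (insert (i + (d:ℤ)) ({i - (d:ℤ)} : Finset ℤ)).card := Finset.card_le_card hsub
          _ ≤ 2 := by
            apply le_trans (Finset.card_insert_le _ _); simp
      rw [nsmul_eq_mul]
      exact mul_le_mul_of_nonneg_right (by exact_mod_cast hcard2) (alphaSeq_nonneg P X d)
    refine le_trans step1 ?_
    rw [← Finset.mul_sum]
    have : ∑ d ∈ (s.erase i).image (fun j => (j - i).natAbs), alphaSeq X d P ≤ α' := by
      apply tailsum
      intro d hd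
      rcases Finset.mem_image.mp hd with ⟨j, hj, rfl⟩
      have : j ≠ i := (Finset.mem_erase.mp hj).1
      omega
    linarith
  -- assemble the second moment bound
  have inner : ∀ i ∈ s, ∑ j ∈ s, (P (E i ∩ E j)).toReal ≤ (m:ℝ) * (q * q) + 1/4 + 2 * α' := by
    intro i hi
    have h1 : ∑ j ∈ s, (P (E i ∩ E j)).toReal
        ≤ ∑ j ∈ s, (q * q + if i = j then (1:ℝ)/4 else alphaSeq X (j - i).natAbs P) :=
      Finset.sum_le_sum (fun j hj => wb i hi j hj)
    rw [Finset.sum_add_distrib, Finset.sum_const, hcard, nsmul_eq_mul] at h1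
    have h2 : ∑ j ∈ s, (if i = j then (1:ℝ)/4 else alphaSeq X (j - i).natAbs P)
        = 1/4 + ∑ j ∈ s.erase i, alphaSeq X (j - i).natAbs P := by
      rw [← Finset.add_sum_erase _ _ hi]
      congr 1
      · rw [if_pos rfl]
      · apply Finset.sum_congr rfl
        intro j hj
        rw [if_neg (fun h => (Finset.mem_erase.mp hj).1 h.symm)]
    rw [h2] at h1
    have h3 := erase_bound i
    linarith
  have intT2le : ∫ ω, T ω ^ 2 ∂P ≤ (m:ℝ) * ((m:ℝ) * (q * q) + 1/4 + 2 * α') := by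
    rw [intT2]
    calc ∑ i ∈ s, ∑ j ∈ s, (P (E i ∩ E j)).toReal
        ≤ ∑ _i ∈ s, ((m:ℝ) * (q * q) + 1/4 + 2 * α') := Finset.sum_le_sum inner
      _ = (m:ℝ) * ((m:ℝ) * (q * q) + 1/4 + 2 * α') := by
          rw [Finset.sum_const, hcard, nsmul_eq_mul]
  -- variance bound
  have hT2int : Integrable (fun ω => T ω ^ 2) P := by
    apply Integrable.mono' (integrable_const ((m:ℝ)^2)) ((hTmeas.pow_const 2).aestronglyMeasurable)
    filter_upwards with ω
    rw [Real.norm_eq_abs, abs_of_nonneg (sq_nonneg _)]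
    have := hT0 ω; have := hTm ω
    nlinarith
  have hvar_int : Integrable (fun ω => (T ω - m * q) ^ 2) P := by
    apply Integrable.mono' (integrable_const (((m:ℝ) + (m:ℝ)*q)^2))
      (((hTmeas.sub measurable_const).pow_const 2).aestronglyMeasurable)
    filter_upwards with ω
    rw [Real.norm_eq_abs, abs_of_nonneg (sq_nonneg _)]
    have := hT0 ω; have := hTm ω
    have hmq : 0 ≤ (m:ℝ) * q := by positivity
    simp only [Pi.sub_apply]
    nlinarith
  have varle : ∫ ω, (T ω - m * q) ^ 2 ∂P ≤ (m:ℝ) * (1/4 + 2 * α') := by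
    have i1 : Integrable (fun ω => T ω ^ 2 - 2 * ((m:ℝ) * q) * T ω) P :=
      hT2int.sub (hTint.const_mul _)
    have e2 : ∫ ω, (T ω - ↑m * q) ^ 2 ∂P
        = ∫ ω, ((T ω ^ 2 - 2 * ((m:ℝ) * q) * T ω) + ((m:ℝ) * q) ^ 2) ∂P := by
      apply integral_congr_ae; filter_upwards with ω; ring
    rw [e2, integral_add i1 (integrable_const _), integral_sub hT2int (hTint.const_mul _),
      integral_const_mul, intT, integral_const]
    simp only [measure_univ, probReal_univ, smul_eq_mul, one_mul]
    nlinarith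
  -- Chebyshev
  set A : Set Ω := {ω | ∑ k ∈ Finset.Icc (1:ℤ) (m:ℤ), X k ω ≤ j} with hA
  have hAmeas : MeasurableSet A := (measurable_sumX X hmeas _) measurableSet_Iic
  have hsq : ∀ ω ∈ A, (p * m / 2) ^ 2 ≤ (T ω - m * q) ^ 2 := by
    intro ω hω
    have hZX : ∀ k, Z k ω = 1 - (X k ω : ℝ) := by
      intro k
      rcases Nat.le_one_iff_eq_zero_or_eq_one.mp (h01 k ω) with h | h <;> simp [hZ, h]
    have hTeq : T ω = (m:ℝ) - ∑ k ∈ s, (X k ω : ℝ) := by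
      rw [hT]
      simp only [hZX]
      rw [Finset.sum_sub_distrib, Finset.sum_const, hcard, nsmul_eq_mul, mul_one]
    have hSle : (∑ k ∈ s, (X k ω : ℝ)) ≤ (j:ℝ) := by
      have hω' : (∑ k ∈ s, X k ω) ≤ j := hω
      calc (∑ k ∈ s, (X k ω : ℝ)) = ((∑ k ∈ s, X k ω : ℕ) : ℝ) := by push_cast; rfl
        _ ≤ (j:ℝ) := by exact_mod_cast hω'
    have hlow : p * m / 2 ≤ T ω - m * q := by
      rw [hTeq]; linarith
    have h0 : (0:ℝ) ≤ p * m / 2 := by positivity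
    nlinarith
  have key : (p * m / 2) ^ 2 * (P A).toReal ≤ ∫ ω, (T ω - m * q) ^ 2 ∂P :=
    le_trans (by have h := setIntegral_ge_of_const_le hAmeas (measure_ne_top P A) hsq hvar_int.integrableOn; rwa [smul_eq_mul, mul_comm] at h)
      (setIntegral_le_integral hvar_int (ae_of_all _ (fun ω => sq_nonneg _)))
  have hvP : vP P X j m = (P A).toReal := rfl
  have hm0 : (0:ℝ) < m := by exact_mod_cast hm
  have hpm : (0:ℝ) < (p * m / 2) ^ 2 := by positivity
  rw [hvP]
  rw [show (1 + 8 * ∑' n : ℕ, alphaSeq X (n + 1) P) / ((1 - qv P X) ^ 2 * m)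
      = ((m:ℝ) * (1/4 + 2 * α')) / ((p * m / 2) ^ 2) by
    rw [← hα'def, ← hqdef, ← hpdef]; field_simp; ring]
  rw [le_div_iff₀ hpm]
  calc (P A).toReal * (p * m / 2) ^ 2 = (p * m / 2) ^ 2 * (P A).toReal := by ring
    _ ≤ ∫ ω, (T ω - m * q) ^ 2 ∂P := key
    _ ≤ (m:ℝ) * (1/4 + 2 * α') := varle

lemma v_nonneg (j m : ℕ) : 0 ≤ vP P X j m := ENNReal.toReal_nonneg

lemma v_le_one (j m : ℕ) : vP P X j m ≤ 1 := by
  have := prob_le_one (μ := P) (s := {ω | ∑ k ∈ Finset.Icc (1:ℤ) (m:ℤ), X k ω ≤ j})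
  simpa [vP] using ENNReal.toReal_mono (by simp) this

lemma recur (hmeas : ∀ k, Measurable (X k)) (hstat : IsStationarySeq P X)
    (j m n : ℕ) (hm : 1 ≤ m) (h3 : 3 * m ≤ n) :
    vP P X j n ≤ vP P X j m * vP P X j m + alphaSeq X (m + 1) P := by
  have hmn : (m:ℤ) ≤ (n:ℤ) := by exact_mod_cast le_trans (by omega) h3
  set A1 : Set Ω := {ω | ∑ k ∈ Finset.Icc (1:ℤ) (m:ℤ), X k ω ≤ j} with hA1
  set B1 : Set Ω := {ω | ∑ k ∈ Finset.Icc ((n:ℤ) - m + 1) (n:ℤ), X k ω ≤ j} with hB1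
  have hsub : {ω | ∑ k ∈ Finset.Icc (1:ℤ) (n:ℤ), X k ω ≤ j} ⊆ A1 ∩ B1 := by
    intro ω hω
    have hω' : ∑ k ∈ Finset.Icc (1:ℤ) (n:ℤ), X k ω ≤ j := hω
    constructor
    · exact le_trans (Finset.sum_le_sum_of_subset
        (Finset.Icc_subset_Icc le_rfl hmn)) hω'
    · exact le_trans (Finset.sum_le_sum_of_subset
        (Finset.Icc_subset_Icc (by omega) le_rfl)) hω'
  have step1 : vP P X j n ≤ (P (A1 ∩ B1)).toReal :=
    ENNReal.toReal_mono (measure_ne_top _ _) (measure_mono hsub)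
  have hstep := stat_pair P X hmeas hstat 1 (m:ℤ) ((n:ℤ) - m + 1) (n:ℤ) j j (-(m:ℤ))
  have e1 : (1:ℤ) + -(m:ℤ) = 1 - m := by ring
  have e2 : (m:ℤ) + -(m:ℤ) = 0 := by ring
  have e3 : ((n:ℤ) - m + 1) + -(m:ℤ) = (n:ℤ) - 2*m + 1 := by ring
  have e4 : (n:ℤ) + -(m:ℤ) = (n:ℤ) - m := by ring
  rw [e1, e2, e3, e4] at hstep
  have hmix := mix P X (m + 1) (1 - (m:ℤ)) 0 ((n:ℤ) - 2*m + 1) ((n:ℤ) - m) le_rfl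
    (by push_cast; omega) j j
  -- identify the two factors with vP
  have f1 : (P {ω | ∑ k ∈ Finset.Icc (1 - (m:ℤ)) 0, X k ω ≤ j}).toReal = vP P X j m := by
    have h := stat_single P X hmeas hstat (1 - (m:ℤ)) 0 j (m:ℤ)
    have g1 : (1 - (m:ℤ)) + m = 1 := by ring
    have g2 : (0:ℤ) + m = m := by ring
    rw [g1, g2] at h
    rw [h]; rfl
  have f2 : (P {ω | ∑ k ∈ Finset.Icc ((n:ℤ) - 2*m + 1) ((n:ℤ) - m), X k ω ≤ j}).toReal
      = vP P X j m := by
    have h := stat_single P X hmeas hstat ((n:ℤ) - 2*m + 1) ((n:ℤ) - m) j (-((n:ℤ) - 2*m))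
    have g1 : ((n:ℤ) - 2*m + 1) + -((n:ℤ) - 2*m) = 1 := by ring
    have g2 : ((n:ℤ) - m) + -((n:ℤ) - 2*m) = m := by ring
    rw [g1, g2] at h
    rw [h]; rfl
  calc vP P X j n ≤ (P (A1 ∩ B1)).toReal := step1
    _ = (P ({ω | ∑ k ∈ Finset.Icc (1 - (m:ℤ)) 0, X k ω ≤ j} ∩
        {ω | ∑ k ∈ Finset.Icc ((n:ℤ) - 2*m + 1) ((n:ℤ) - m), X k ω ≤ j})).toReal := by
        rw [hA1, hB1, hstep]
    _ ≤ _ := by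
        refine le_trans (mix P X (m + 1) (1 - (m:ℤ)) 0 ((n:ℤ) - 2*m + 1) ((n:ℤ) - m)
          (le_refl 0) (by push_cast; omega) j j) ?_
        rw [f1, f2]

lemma sum_div3_le (f : ℕ → ℝ) (hf : ∀ d, 0 ≤ f d) (t : Finset ℕ) :
    ∑ n ∈ t, f (n / 3) ≤ 3 * ∑ d ∈ t.image (· / 3), f d := by
  rw [Finset.sum_comp f (· / 3)]
  have hb : ∀ d ∈ t.image (· / 3), (t.filter (fun n => n / 3 = d)).card • f d ≤ 3 * f d := by
    intro d _
    have hcard : (t.filter (fun n => n / 3 = d)).card ≤ 3 := by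
      have hsub : t.filter (fun n => n / 3 = d) ⊆ ({3*d, 3*d+1, 3*d+2} : Finset ℕ) := by
        intro n hn
        have h := (Finset.mem_filter.mp hn).2
        simp only [Finset.mem_insert, Finset.mem_singleton]
        omega
      refine le_trans (Finset.card_le_card hsub) ?_
      refine le_trans (Finset.card_insert_le _ _) ?_
      refine Nat.succ_le_succ (le_trans (Finset.card_insert_le _ _) ?_)
      simp
    rw [nsmul_eq_mul]
    exact mul_le_mul_of_nonneg_right (by exact_mod_cast hcard) (hf d)
  calc ∑ d ∈ t.image (· / 3), (t.filter (fun n => n / 3 = d)).card • f d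
      ≤ ∑ d ∈ t.image (· / 3), 3 * f d := Finset.sum_le_sum hb
    _ = 3 * ∑ d ∈ t.image (· / 3), f d := by rw [Finset.mul_sum]

lemma boot (hmeas : ∀ k, Measurable (X k)) (hstat : IsStationarySeq P X)
    (hα : Summable fun n : ℕ => alphaSeq X (n + 1) P)
    (j M N : ℕ) (hM : 1 ≤ M)
    (hsmall : ∀ m, M ≤ m → vP P X j m ≤ 1/6) :
    ∑ m ∈ Finset.Icc 1 N, vP P X j m
      ≤ 6 * M + 6 * ∑' n : ℕ, alphaSeq X (n + 1) P := by
  set α' : ℝ := ∑' n : ℕ, alphaSeq X (n + 1) P with hα'def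
  have hα'0 : 0 ≤ α' := tsum_nonneg (fun n => alphaSeq_nonneg P X (n + 1))
  have hcard1 : ∀ (a b : ℕ), (∑ m ∈ Finset.Icc a b, vP P X j m) ≤ (b + 1 - a : ℕ) := by
    intro a b
    calc ∑ m ∈ Finset.Icc a b, vP P X j m ≤ ∑ _m ∈ Finset.Icc a b, (1:ℝ) :=
        Finset.sum_le_sum (fun m _ => v_le_one P X j m)
      _ = ((Finset.Icc a b).card : ℝ) := by rw [Finset.sum_const, nsmul_eq_mul, mul_one]
      _ = _ := by rw [Nat.card_Icc]
  by_cases hN : N < 3 * M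
  · refine le_trans (hcard1 1 N) ?_
    have : (N + 1 - 1 : ℕ) ≤ 3 * M := by omega
    calc ((N + 1 - 1 : ℕ) : ℝ) ≤ (3 * M : ℕ) := by exact_mod_cast this
      _ ≤ 6 * M + 6 * α' := by push_cast; nlinarith [Nat.one_le_iff_ne_zero.mp hM]
  · push_neg at hN
    have hsplit : Finset.Icc 1 N = Finset.Icc 1 (3*M - 1) ∪ Finset.Icc (3*M) N := by
      ext x; simp only [Finset.mem_Icc, Finset.mem_union]; omega
    have hdisj : Disjoint (Finset.Icc 1 (3*M - 1)) (Finset.Icc (3*M) N) := by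
      rw [Finset.disjoint_left]
      intro a ha hb
      simp only [Finset.mem_Icc] at ha hb
      omega
    set T := ∑ m ∈ Finset.Icc 1 N, vP P X j m with hT
    have hT0 : 0 ≤ T := Finset.sum_nonneg (fun m _ => v_nonneg P X j m)
    -- tail bound
    have tail : ∑ n ∈ Finset.Icc (3*M) N, vP P X j n
        ≤ (1/6) * (3 * T) + 3 * α' := by
      have step : ∀ n ∈ Finset.Icc (3*M) N,
          vP P X j n ≤ (1/6) * vP P X j (n / 3) + alphaSeq X (n / 3 + 1) P := by
        intro n hn
        have hn' := Finset.mem_Icc.mp hn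
        have hm1 : 1 ≤ n / 3 := by omega
        have hmM : M ≤ n / 3 := by omega
        have h3 : 3 * (n / 3) ≤ n := by omega
        have hrec := recur P X hmeas hstat j (n / 3) n hm1 h3
        have hsm := hsmall (n / 3) hmM
        have hv0 := v_nonneg P X j (n / 3)
        nlinarith
      calc ∑ n ∈ Finset.Icc (3*M) N, vP P X j n
          ≤ ∑ n ∈ Finset.Icc (3*M) N,
              ((1/6) * vP P X j (n / 3) + alphaSeq X (n / 3 + 1) P) :=
            Finset.sum_le_sum step
        _ = (1/6) * ∑ n ∈ Finset.Icc (3*M) N, vP P X j (n / 3)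
            + ∑ n ∈ Finset.Icc (3*M) N, alphaSeq X (n / 3 + 1) P := by
            rw [Finset.sum_add_distrib, Finset.mul_sum]
        _ ≤ (1/6) * (3 * T) + 3 * α' := by
            have hv : ∑ n ∈ Finset.Icc (3*M) N, vP P X j (n / 3)
                ≤ 3 * ∑ d ∈ (Finset.Icc (3*M) N).image (· / 3), vP P X j d :=
              sum_div3_le (fun d => vP P X j d) (fun d => v_nonneg P X j d) _
            have hvsub : ∑ d ∈ (Finset.Icc (3*M) N).image (· / 3), vP P X j d ≤ T := by
              rw [hT]
              apply Finset.sum_le_sum_of_subset_of_nonneg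
              · intro d hd
                rcases Finset.mem_image.mp hd with ⟨n, hn, rfl⟩
                have hn' := Finset.mem_Icc.mp hn
                simp only [Finset.mem_Icc]
                omega
              · intro d _ _; exact v_nonneg P X j d
            have ha : ∑ n ∈ Finset.Icc (3*M) N, alphaSeq X (n / 3 + 1) P
                ≤ 3 * ∑ d ∈ (Finset.Icc (3*M) N).image (· / 3), alphaSeq X (d + 1) P :=
              sum_div3_le (fun d => alphaSeq X (d + 1) P)
                (fun d => alphaSeq_nonneg P X (d + 1)) _
            have ha2 : ∑ d ∈ (Finset.Icc (3*M) N).image (· / 3), alphaSeq X (d + 1) P ≤ α' :=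
              hα.sum_le_tsum _ (fun n _ => alphaSeq_nonneg P X (n + 1))
            nlinarith [v_nonneg P X j 0]
    have head : ∑ m ∈ Finset.Icc 1 (3*M - 1), vP P X j m ≤ ((3*M - 1 + 1 - 1 : ℕ) : ℝ) :=
      hcard1 1 (3*M - 1)
    have hTsplit : T = ∑ m ∈ Finset.Icc 1 (3*M - 1), vP P X j m
        + ∑ n ∈ Finset.Icc (3*M) N, vP P X j n := by
      rw [hT, hsplit, Finset.sum_union hdisj]
    have hc : ((3*M - 1 + 1 - 1 : ℕ) : ℝ) ≤ 3 * M := by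
      have : (3*M - 1 + 1 - 1 : ℕ) ≤ 3 * M := by omega
      exact_mod_cast le_trans this (le_refl _)
    have hfin : T ≤ 3 * M + (1/6) * (3 * T) + 3 * α' := by
      calc T = ∑ m ∈ Finset.Icc 1 (3*M - 1), vP P X j m
          + ∑ n ∈ Finset.Icc (3*M) N, vP P X j n := hTsplit
        _ ≤ ((3*M - 1 + 1 - 1 : ℕ) : ℝ) + ((1/6) * (3 * T) + 3 * α') := add_le_add head tail
        _ ≤ 3 * M + (1/6) * (3 * T) + 3 * α' := by linarith
    linarith

lemma Hsum_telescope (H : ℕ → ℝ) : ∀ (M s : ℕ), s ≤ M →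
    H s = H M + ∑ j ∈ Finset.range M, (H j - H (j+1)) * (if s ≤ j then (1:ℝ) else 0) := by
  intro M
  induction M with
  | zero => intro s hs; simp [Nat.le_zero.mp hs]
  | succ M ih =>
    intro s hs
    rw [Finset.sum_range_succ]
    by_cases h : s ≤ M
    · rw [if_pos h]
      have := ih s h
      linarith
    · have hsM : s = M + 1 := by omega
      subst hsM
      have hz : ∑ j ∈ Finset.range M, (H j - H (j+1)) * (if M + 1 ≤ j then (1:ℝ) else 0) = 0 := by
        apply Finset.sum_eq_zero
        intro j hj
        rw [if_neg (by simp at hj; omega), mul_zero]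
      rw [if_neg (by omega), hz]; ring

lemma abel_identity (H : ℕ → ℝ) (N : ℕ) :
    ∑ j ∈ Finset.range (N+1), (j:ℝ) * (H j - H (j+1))
      = (∑ j ∈ Finset.range (N+1), H j) - H 0 - N * H (N+1) := by
  induction N with
  | zero => simp
  | succ N ih =>
    rw [Finset.sum_range_succ, ih, Finset.sum_range_succ (f := H) (n := N+1)]
    push_cast; ring

lemma int_eq (hmeas : ∀ k, Measurable (X k)) (h01 : ∀ k ω, X k ω ≤ 1)
    (H : ℕ → ℝ) (mm : ℕ) :
    ∫ ω, H (∑ k ∈ Finset.Icc (1:ℤ) (mm:ℤ), X k ω) ∂P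
      = H mm + ∑ j ∈ Finset.range mm, (H j - H (j+1)) * vP P X j mm := by
  set S : Ω → ℕ := fun ω => ∑ k ∈ Finset.Icc (1:ℤ) (mm:ℤ), X k ω with hS
  have hSmeas : Measurable S := measurable_sumX X hmeas _
  have hSle : ∀ ω, S ω ≤ mm := by
    intro ω
    calc S ω ≤ ∑ k ∈ Finset.Icc (1:ℤ) (mm:ℤ), 1 := Finset.sum_le_sum (fun k _ => h01 k ω)
      _ = (Finset.Icc (1:ℤ) (mm:ℤ)).card := by rw [Finset.sum_const, smul_eq_mul, mul_one]
      _ = mm := by rw [Int.card_Icc]; simp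
  have hmeasSet : ∀ j : ℕ, MeasurableSet {ω | S ω ≤ j} := fun j => hSmeas measurableSet_Iic
  have hind : ∀ j : ℕ, (fun ω => if S ω ≤ j then (1:ℝ) else 0)
      = Set.indicator {ω | S ω ≤ j} (fun _ => (1:ℝ)) := by
    intro j; funext ω; by_cases h : S ω ≤ j <;> simp [Set.indicator, h]
  have hint : ∀ j : ℕ, Integrable (fun ω => if S ω ≤ j then (1:ℝ) else 0) P := by
    intro j; rw [hind j]; exact (integrable_const 1).indicator (hmeasSet j)
  have hint2 : ∀ j : ℕ,
      Integrable (fun ω => (H j - H (j+1)) * (if S ω ≤ j then (1:ℝ) else 0)) P :=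
    fun j => (hint j).const_mul _
  calc ∫ ω, H (S ω) ∂P
      = ∫ ω, (H mm + ∑ j ∈ Finset.range mm,
          (H j - H (j+1)) * (if S ω ≤ j then (1:ℝ) else 0)) ∂P := by
        apply integral_congr_ae
        filter_upwards with ω
        exact Hsum_telescope H mm (S ω) (hSle ω)
    _ = H mm + ∑ j ∈ Finset.range mm, (H j - H (j+1)) * vP P X j mm := by
        rw [integral_add (integrable_const _) (integrable_finset_sum _ (fun j _ => hint2 j)),
          integral_const, integral_finset_sum _ (fun j _ => hint2 j)]
        simp only [measure_univ, probReal_univ, smul_eq_mul, one_mul]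
        congr 1
        apply Finset.sum_congr rfl
        intro j _
        rw [integral_const_mul, hind j, integral_indicator_const _ (hmeasSet j),
          smul_eq_mul, mul_one]
        rfl


end Aux

/-- Lemma 2.3: Σₙ E H(X₁+⋯+Xₙ) < ∞. -/
theorem stmt8 {Ω : Type*} {mΩ : MeasurableSpace Ω} (P : Measure Ω) [IsProbabilityMeasure P]
    (H : ℕ → ℝ) (hH0 : ∀ n, 0 ≤ H n) (hHmono : Antitone H) (hHsum : Summable H)
    (X : ℤ → Ω → ℕ) (hmeas : ∀ k, Measurable (X k)) (h01 : ∀ k ω, X k ω ≤ 1)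
    (hstat : IsStationarySeq P X)
    (hnondeg1 : P {ω | X 0 ω = 1} ≠ 0) (hnondeg0 : P {ω | X 0 ω = 0} ≠ 0)
    (hα : Summable fun n : ℕ => alphaSeq X (n + 1) P) :
    Summable fun n : ℕ =>
      ∫ ω, H (∑ k ∈ Finset.Icc (1 : ℤ) ((n : ℤ) + 1), X k ω) ∂P := by
  -- p > 0
  have hmeas1 : MeasurableSet {ω | X 0 ω = 1} := (hmeas 0) (measurableSet_singleton 1)
  have hset0 : {ω | ∑ k ∈ Finset.Icc (0:ℤ) 0, X k ω ≤ 0} = {ω | X 0 ω = 1}ᶜ := by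
    ext ω
    simp only [Set.mem_setOf_eq, Set.mem_compl_iff, Finset.Icc_self, Finset.sum_singleton,
      Nat.le_zero]
    have := h01 0 ω
    omega
  have hqeq : qv P X = 1 - (P {ω | X 0 ω = 1}).toReal := by
    have h1 : P {ω | X 0 ω = 1}ᶜ = 1 - P {ω | X 0 ω = 1} := prob_compl_eq_one_sub hmeas1
    have : qv P X = (P {ω | X 0 ω = 1}ᶜ).toReal := by rw [qv, hset0]
    rw [this, h1, ENNReal.toReal_sub_of_le prob_le_one ENNReal.one_ne_top, ENNReal.toReal_one]
  have hp : 0 < 1 - qv P X := by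
    rw [hqeq]
    have := ENNReal.toReal_pos hnondeg1 (measure_ne_top P _)
    linarith
  obtain ⟨p, hpdef⟩ : ∃ x : ℝ, x = 1 - qv P X := ⟨_, rfl⟩
  have hp' : 0 < p := by rw [hpdef]; exact hp
  obtain ⟨α', hα'def⟩ : ∃ x : ℝ, x = ∑' n : ℕ, alphaSeq X (n + 1) P := ⟨_, rfl⟩
  have hα'0 : 0 ≤ α' := by rw [hα'def]; exact tsum_nonneg (fun n => alphaSeq_nonneg P X (n + 1))
  obtain ⟨K, hKdef⟩ : ∃ x : ℝ, x = 1 + 8 * α' := ⟨_, rfl⟩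
  have hK0 : 0 < K := by rw [hKdef]; linarith
  obtain ⟨C₂, hC₂def⟩ : ∃ x : ℝ, x = 6 * K / p ^ 2 + 3 := ⟨_, rfl⟩
  have hC₂0 : 0 ≤ C₂ := by
    rw [hC₂def]
    have h1 : (0:ℝ) ≤ 6 * K / p ^ 2 := div_nonneg (by linarith) (by positivity)
    linarith
  obtain ⟨Mf, hMfdef⟩ :
      ∃ f : ℕ → ℕ, f = fun j : ℕ => ⌈(2 * ((j:ℕ):ℝ)) / p⌉₊ + ⌈6 * K / p ^ 2⌉₊ + 1 :=
    ⟨_, rfl⟩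
  have hM1 : ∀ j, 1 ≤ Mf j := fun j => by simp only [hMfdef]; omega
  have hsmall : ∀ j m, Mf j ≤ m → vP P X j m ≤ 1/6 := by
    intro j m hm
    have hm1 : 1 ≤ m := le_trans (hM1 j) hm
    have hm0R : (0:ℝ) < m := by exact_mod_cast hm1
    have hceil1 : ⌈(2 * (j:ℝ)) / p⌉₊ ≤ m := by simp only [hMfdef] at hm; omega
    have hceil2 : ⌈6 * K / p ^ 2⌉₊ ≤ m := by simp only [hMfdef] at hm; omega
    have hc1 : (2 * (j:ℝ)) / p ≤ m := le_trans (Nat.le_ceil _) (Nat.cast_le.mpr hceil1)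
    have hc2 : 6 * K / p ^ 2 ≤ m := le_trans (Nat.le_ceil _) (Nat.cast_le.mpr hceil2)
    have hj' : (j:ℝ) ≤ (1 - qv P X) * m / 2 := by
      rw [← hpdef]
      rw [div_le_iff₀ hp'] at hc1
      nlinarith
    have hch := cheb P X hmeas h01 hstat hα hp j m hm1 hj'
    rw [← hα'def, ← hpdef, ← hKdef] at hch
    have hp2m : (0:ℝ) < p ^ 2 * m := mul_pos (pow_pos hp' 2) hm0R
    have hfin : K / (p ^ 2 * m) ≤ 1/6 := by
      rw [div_le_iff₀ (pow_pos hp' 2)] at hc2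
      rw [div_le_iff₀ hp2m]
      nlinarith
    linarith
  have hMlin : ∀ j, (Mf j : ℝ) ≤ (2/p) * j + C₂ := by
    intro j
    have c1 : (⌈(2 * (j:ℝ)) / p⌉₊ : ℝ) < (2 * (j:ℝ)) / p + 1 :=
      Nat.ceil_lt_add_one (div_nonneg (by positivity) (le_of_lt hp'))
    have c2 : (⌈6 * K / p ^ 2⌉₊ : ℝ) < 6 * K / p ^ 2 + 1 :=
      Nat.ceil_lt_add_one (div_nonneg (by linarith) (by positivity))
    have e : (2 * (j:ℝ)) / p = (2/p) * j := by ring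
    simp only [hMfdef, hC₂def]
    push_cast
    linarith [c1, c2]
  obtain ⟨HU, hHUdef⟩ : ∃ x : ℝ, x = ∑' n, H n := ⟨_, rfl⟩
  have hHU0 : 0 ≤ HU := by rw [hHUdef]; exact tsum_nonneg hH0
  have hH0N : ∀ N, ∑ j ∈ Finset.range N, H j ≤ HU := by
    intro N; rw [hHUdef]; exact hHsum.sum_le_tsum _ (fun _ _ => hH0 _)
  have hΔ0 : ∀ j, 0 ≤ H j - H (j+1) := fun j => by
    have := hHmono (Nat.le_succ j); linarith
  have habel : ∀ N, ∑ j ∈ Finset.range N, (j:ℝ) * (H j - H (j+1)) ≤ HU := by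
    intro N
    cases N with
    | zero => simpa using hHU0
    | succ N =>
      rw [abel_identity H N]
      have h1 := hH0N (N+1)
      have h3 : 0 ≤ (N:ℝ) * H (N+1) := mul_nonneg (Nat.cast_nonneg N) (hH0 _)
      have h2 := hH0 0
      linarith
  have htele : ∀ N, ∑ j ∈ Finset.range N, (H j - H (j+1)) ≤ H 0 := by
    intro N
    rw [Finset.sum_range_sub' H N]
    linarith [hH0 N]
  have hrw : ∀ n : ℕ, ∫ ω, H (∑ k ∈ Finset.Icc (1:ℤ) ((n:ℤ)+1), X k ω) ∂P
      = H (n+1) + ∑ j ∈ Finset.range (n+1), (H j - H (j+1)) * vP P X j (n+1) := by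
    intro n
    have h := int_eq P X hmeas h01 H (n+1)
    have e : (((n+1:ℕ)):ℤ) = (n:ℤ)+1 := by push_cast; ring
    rw [e] at h
    exact h
  have hnn : ∀ n : ℕ, 0 ≤ ∫ ω, H (∑ k ∈ Finset.Icc (1:ℤ) ((n:ℤ)+1), X k ω) ∂P :=
    fun n => integral_nonneg (fun ω => hH0 _)
  apply summable_of_sum_range_le (c := HU + ((12/p) * HU + (6*C₂ + 6*α') * H 0)) hnn
  intro N
  have part1 : ∑ n ∈ Finset.range N, H (n+1) ≤ HU := by
    have e := Finset.sum_range_succ' H N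
    have h1 := hH0N (N+1)
    have h2 := hH0 0
    linarith
  have part2 : ∑ n ∈ Finset.range N, ∑ j ∈ Finset.range (n+1),
      (H j - H (j+1)) * vP P X j (n+1)
      ≤ (12/p) * HU + (6*C₂ + 6*α') * H 0 := by
    have ext1 : ∑ n ∈ Finset.range N, ∑ j ∈ Finset.range (n+1),
        (H j - H (j+1)) * vP P X j (n+1)
        ≤ ∑ n ∈ Finset.range N, ∑ j ∈ Finset.range N,
          (H j - H (j+1)) * vP P X j (n+1) := by
      apply Finset.sum_le_sum
      intro n hn
      apply Finset.sum_le_sum_of_subset_of_nonneg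
      · apply Finset.range_subset_range.mpr
        have := Finset.mem_range.mp hn
        omega
      · intro j _ _
        exact mul_nonneg (hΔ0 j) (v_nonneg P X j (n+1))
    refine le_trans ext1 ?_
    rw [Finset.sum_comm]
    have perj : ∀ j ∈ Finset.range N,
        ∑ n ∈ Finset.range N, (H j - H (j+1)) * vP P X j (n+1)
        ≤ (12/p) * ((j:ℝ) * (H j - H (j+1))) + (6*C₂ + 6*α') * (H j - H (j+1)) := by
      intro j _
      rw [← Finset.mul_sum]
      have hv : ∑ n ∈ Finset.range N, vP P X j (n+1) = ∑ m ∈ Finset.Icc 1 N, vP P X j m := by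
        refine Finset.sum_nbij' (fun n => n + 1) (fun m => m - 1) ?_ ?_ ?_ ?_ ?_ <;>
          intro a ha <;>
          simp only [Finset.mem_range, Finset.mem_Icc] at ha ⊢ <;>
          omega
      have hb := boot P X hmeas hstat hα j (Mf j) N (hM1 j) (fun m hm => hsmall j m hm)
      rw [← hα'def] at hb
      rw [hv]
      calc (H j - H (j+1)) * ∑ m ∈ Finset.Icc 1 N, vP P X j m
          ≤ (H j - H (j+1)) * (6 * (Mf j : ℝ) + 6 * α') :=
            mul_le_mul_of_nonneg_left hb (hΔ0 j)
        _ ≤ (12/p) * ((j:ℝ) * (H j - H (j+1))) + (6*C₂ + 6*α') * (H j - H (j+1)) := by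
            have hprod := mul_le_mul_of_nonneg_left (hMlin j) (hΔ0 j)
            calc (H j - H (j+1)) * (6 * (Mf j : ℝ) + 6 * α')
                = 6 * ((H j - H (j+1)) * (Mf j : ℝ)) + 6 * α' * (H j - H (j+1)) := by ring
              _ ≤ 6 * ((H j - H (j+1)) * ((2/p) * j + C₂)) + 6 * α' * (H j - H (j+1)) := by
                  linarith
              _ = (12/p) * ((j:ℝ) * (H j - H (j+1))) + (6*C₂ + 6*α') * (H j - H (j+1)) := by
                  ring
    calc ∑ j ∈ Finset.range N, ∑ n ∈ Finset.range N, (H j - H (j+1)) * vP P X j (n+1)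
        ≤ ∑ j ∈ Finset.range N,
          ((12/p) * ((j:ℝ) * (H j - H (j+1))) + (6*C₂ + 6*α') * (H j - H (j+1))) :=
          Finset.sum_le_sum perj
      _ = (12/p) * (∑ j ∈ Finset.range N, (j:ℝ) * (H j - H (j+1)))
          + (6*C₂ + 6*α') * (∑ j ∈ Finset.range N, (H j - H (j+1))) := by
          rw [Finset.sum_add_distrib, Finset.mul_sum, Finset.mul_sum]
      _ ≤ (12/p) * HU + (6*C₂ + 6*α') * H 0 := by
          have h1 := habel N
          have h2 := htele N
          have h3 : (0:ℝ) ≤ 12/p := div_nonneg (by norm_num) (le_of_lt hp')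
          have h4 : (0:ℝ) ≤ 6*C₂ + 6*α' := by linarith
          have := mul_le_mul_of_nonneg_left h1 h3
          have := mul_le_mul_of_nonneg_left h2 h4
          linarith
  calc ∑ n ∈ Finset.range N, ∫ ω, H (∑ k ∈ Finset.Icc (1:ℤ) ((n:ℤ)+1), X k ω) ∂P
      = ∑ n ∈ Finset.range N, (H (n+1) + ∑ j ∈ Finset.range (n+1),
          (H j - H (j+1)) * vP P X j (n+1)) := Finset.sum_congr rfl (fun n _ => hrw n)
    _ = (∑ n ∈ Finset.range N, H (n+1)) + ∑ n ∈ Finset.range N, ∑ j ∈ Finset.range (n+1),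
          (H j - H (j+1)) * vP P X j (n+1) := Finset.sum_add_distrib
    _ ≤ HU + ((12/p) * HU + (6*C₂ + 6*α') * H 0) := add_le_add part1 part2
end
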